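/- Let μ be a finite Borel measure on a locally convex Hausdorff space E concentrated on disjoint compact sets Kₙ ⊆ E, let bₙ > 0 with Σₙ μ(Kₙ)/bₙ < ∞, and define μ̃(A) = Σₙ μ(bₙ⁻¹A ∩ Kₙ)/bₙ. Then μ̃ is a finite Borel measure, and for every continuous linear functional e' on E, ∫ ⟨e', x⟩ dμ̃(x) = ∫ ⟨e', x⟩ dμ(x). In particular any barycenter of (normalized) μ̃ yields the barycenter of μ. -/

import Mathlib

open MeasureTheory Set
open scoped ENNReal NNReal

theorem stmt15 {E : Type*} [AddCommGroup E] [Module ℝ E] [TopologicalSpace E]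
    [IsTopologicalAddGroup E] [ContinuousSMul ℝ E] [LocallyConvexSpace ℝ E] [T2Space E]
    [MeasurableSpace E] [BorelSpace E]
    (μ : Measure E) [IsFiniteMeasure μ]
    (K : ℕ → Set E) (hK : ∀ n, IsCompact (K n))
    (hdisj : ∀ m n, m ≠ n → Disjoint (K m) (K n))
    (hconc : μ (⋃ n, K n)ᶜ = 0)
    (b : ℕ → ℝ) (hb : ∀ n, 0 < b n)
    (hsum : (∑' n, μ (K n) / ENNReal.ofReal (b n)) < ⊤) :
    let μt : Measure E := Measure.sum fun n =>
      (ENNReal.ofReal (b n))⁻¹ • Measure.map (fun x => b n • x) (μ.restrict (K n))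
    IsFiniteMeasure μt ∧
    (∀ e' : E →L[ℝ] ℝ, ∫ x, e' x ∂μt = ∫ x, e' x ∂μ) ∧
    (∀ r : E, (∀ e' : E →L[ℝ] ℝ, e' r = ∫ x, e' x ∂μt) →
      ∀ e' : E →L[ℝ] ℝ, e' r = ∫ x, e' x ∂μ) := by
  intro μt
  have hbm : ∀ n, Measurable (fun x : E => b n • x) :=
    fun n => (continuous_const_smul (b n)).measurable
  have hc0 : ∀ n, ENNReal.ofReal (b n) ≠ 0 := by
    intro n
    simp only [ne_eq, ENNReal.ofReal_eq_zero, not_le]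
    exact hb n
  have hct : ∀ n, ENNReal.ofReal (b n) ≠ ⊤ := fun n => ENNReal.ofReal_ne_top
  have hKm : ∀ n, MeasurableSet (K n) := fun n => (hK n).isClosed.measurableSet
  have hpair : Pairwise (Function.onFun Disjoint K) := fun m n h => hdisj m n h
  have hrestrict : μ.restrict (⋃ n, K n) = μ := by
    have : (⋃ n, K n) =ᵐ[μ] (univ : Set E) := by
      rw [ae_eq_univ]; exact hconc
    rw [Measure.restrict_congr_set this, Measure.restrict_univ]
  -- finiteness
  have hfin : IsFiniteMeasure μt := by
    constructor
    rw [Measure.sum_apply _ MeasurableSet.univ]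
    calc ∑' n, ((ENNReal.ofReal (b n))⁻¹ •
          Measure.map (fun x => b n • x) (μ.restrict (K n))) univ
        = ∑' n, μ (K n) / ENNReal.ofReal (b n) := by
          congr 1; funext n
          rw [Measure.smul_apply, Measure.map_apply (hbm n) MeasurableSet.univ]
          simp [Measure.restrict_apply_univ, div_eq_mul_inv, mul_comm]
      _ < ⊤ := hsum
  have hmain : ∀ e' : E →L[ℝ] ℝ, ∫ x, e' x ∂μt = ∫ x, e' x ∂μ := by
    intro e'
    -- per-piece integral identity
    have hpiece : ∀ n, ∫ x, e' x ∂((ENNReal.ofReal (b n))⁻¹ •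
        Measure.map (fun x => b n • x) (μ.restrict (K n))) = ∫ x in K n, e' x ∂μ := by
      intro n
      rw [integral_smul_measure,
        integral_map (hbm n).aemeasurable e'.continuous.aestronglyMeasurable]
      simp only [e'.map_smul, smul_eq_mul]
      rw [integral_const_mul, ENNReal.toReal_inv, ENNReal.toReal_ofReal (hb n).le,
        ← mul_assoc, inv_mul_cancel₀ (hb n).ne', one_mul]
    -- per-piece lintegral identity
    have hlpiece : ∀ n, ∫⁻ x, ‖e' x‖₊ ∂((ENNReal.ofReal (b n))⁻¹ •
        Measure.map (fun x => b n • x) (μ.restrict (K n))) = ∫⁻ x in K n, ‖e' x‖₊ ∂μ := by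
      intro n
      have hme : Measurable fun x : E => (‖e' x‖₊ : ℝ≥0∞) :=
        measurable_coe_nnreal_ennreal_iff.mpr e'.continuous.nnnorm.measurable
      rw [lintegral_smul_measure, lintegral_map hme (hbm n)]
      have heq : ∀ x : E, ((‖e' (b n • x)‖₊ : ℝ≥0∞)) = ENNReal.ofReal (b n) * ‖e' x‖₊ := by
        intro x
        rw [e'.map_smul, smul_eq_mul, nnnorm_mul, ENNReal.coe_mul, ← enorm_eq_nnnorm (b n),
          Real.enorm_eq_ofReal (hb n).le]
      simp only [heq]
      rw [lintegral_const_mul _ hme, smul_eq_mul, ← mul_assoc,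
        ENNReal.inv_mul_cancel (hc0 n) (hct n), one_mul]
    have hltotal : ∫⁻ x, ‖e' x‖₊ ∂μt = ∫⁻ x, ‖e' x‖₊ ∂μ := by
      rw [show μt = Measure.sum _ from rfl, lintegral_sum_measure]
      simp only [hlpiece]
      rw [← lintegral_iUnion hKm hpair, hrestrict]
    by_cases hint : Integrable (fun x => e' x) μ
    · have hintt : Integrable (fun x => e' x) μt := by
        refine ⟨e'.continuous.aestronglyMeasurable, ?_⟩
        rw [HasFiniteIntegral]; simp only [enorm_eq_nnnorm]; rw [hltotal]
        exact hint.2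
      rw [show μt = Measure.sum _ from rfl, integral_sum_measure hintt]
      simp only [hpiece]
      rw [← integral_iUnion hKm hpair (hint.integrableOn)]
      conv_rhs => rw [← hrestrict]
    · have hintt : ¬ Integrable (fun x => e' x) μt := by
        intro h
        exact hint ⟨e'.continuous.aestronglyMeasurable, by rw [HasFiniteIntegral]; simp only [enorm_eq_nnnorm]; rw [← hltotal]; exact h.2⟩
      rw [integral_undef hintt, integral_undef hint]
  exact ⟨hfin, hmain, fun r hr e' => by rw [hr e', hmain e']⟩
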